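/- If f and g are barcodes with C(f^∧q) = C(g^∧q) for every integer q ≥ 1, then for every integer p ≥ 1 one has B(f^∧p) = B(g^∧p) and D(f^∧p) = D(g^∧p). That is, the birth and death series of all exterior powers of a barcode are determined by its exterior critical series. -/

import Mathlib

noncomputable section

/-- A barcode: a finite multiset of bars `(α, ℓ)` with positive lifespan `ℓ`. -/
def IsBarcode (f : Multiset (ℝ × ℝ)) : Prop := ∀ b ∈ f, (0 : ℝ) < b.2

/-- The `p`-th exterior power of a barcode: each `p`-element sub-multiset `s`
contributes the bar whose birth grade is the sum of the birth grades in `s`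
and whose lifespan is the minimum of the lifespans in `s`. -/
noncomputable def extPow (f : Multiset (ℝ × ℝ)) (p : ℕ) : Multiset (ℝ × ℝ) :=
  (Multiset.powersetCard p f).map
    (fun s => ((s.map Prod.fst).sum, sInf {x : ℝ | x ∈ s.map Prod.snd}))

/-- The birth series `B(f) = Σ_{(α,ℓ)∈f} x^α`. -/
noncomputable def birthSeries (f : Multiset (ℝ × ℝ)) : ℝ →₀ ℤ :=
  (f.map (fun b => Finsupp.single b.1 (1 : ℤ))).sum

/-- The death series `D(f) = Σ_{(α,ℓ)∈f} x^{α+ℓ}`. -/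
noncomputable def deathSeries (f : Multiset (ℝ × ℝ)) : ℝ →₀ ℤ :=
  (f.map (fun b => Finsupp.single (b.1 + b.2) (1 : ℤ))).sum

/-- The critical series `C(f) = B(f) − D(f)`. -/
noncomputable def critSeries (f : Multiset (ℝ × ℝ)) : ℝ →₀ ℤ :=
  birthSeries f - deathSeries f

/-- The lifespan series `L(f) = Σ_{(α,ℓ)∈f} x^ℓ`. -/
noncomputable def lifespanSeries (f : Multiset (ℝ × ℝ)) : ℝ →₀ ℤ :=
  (f.map (fun b => Finsupp.single b.2 (1 : ℤ))).sum

/-- The drift `Δ(f) = Σ_{(α,ℓ)∈f} α`. -/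
noncomputable def drift (f : Multiset (ℝ × ℝ)) : ℝ :=
  (f.map Prod.fst).sum

/-- The moment `μ(P) = Σ_β P(β)·β`. -/
noncomputable def moment (P : ℝ →₀ ℤ) : ℝ :=
  P.sum fun β n => (n : ℝ) * β

/-- The second moment `μ₂(P) = Σ_β P(β)·β²`. -/
noncomputable def moment2 (P : ℝ →₀ ℤ) : ℝ :=
  P.sum fun β n => (n : ℝ) * β ^ 2

end


lemma sum_single_apply {ι : Type*} (M : Multiset ι) (k : ι → ℝ) (β : ℝ) :
    ((M.map (fun s => Finsupp.single (k s) (1:ℤ))).sum) β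
      = (M.map (fun s => if k s = β then (1:ℤ) else 0)).sum := by
  induction M using Multiset.induction_on with
  | empty => simp
  | cons a M ih => simp [ih, Finsupp.single_apply]

lemma sum_ite_nonneg {ι : Type*} (M : Multiset ι) (k : ι → ℝ) (β : ℝ) :
    0 ≤ (M.map (fun s => if k s = β then (1:ℤ) else 0)).sum := by
  apply Multiset.sum_nonneg
  intro x hx
  rcases Multiset.mem_map.mp hx with ⟨s, _, rfl⟩
  split <;> norm_num

lemma sum_ite_pos {ι : Type*} {M : Multiset ι} {k : ι → ℝ} {β : ℝ}
    (h : ∃ s ∈ M, k s = β) :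
    0 < (M.map (fun s => if k s = β then (1:ℤ) else 0)).sum := by
  obtain ⟨s0, hs0, hk⟩ := h
  obtain ⟨M', rfl⟩ := Multiset.exists_cons_of_mem hs0
  rw [Multiset.map_cons, Multiset.sum_cons, if_pos hk]
  have := sum_ite_nonneg M' k β
  omega

lemma sum_ite_zero {ι : Type*} {M : Multiset ι} {k : ι → ℝ} {β : ℝ}
    (h : ∀ s ∈ M, k s ≠ β) :
    (M.map (fun s => if k s = β then (1:ℤ) else 0)).sum = 0 := by
  apply Multiset.sum_eq_zero
  intro x hx
  rcases Multiset.mem_map.mp hx with ⟨s, hs, rfl⟩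
  exact if_neg (h s hs)

lemma take_sum_le : ∀ (l : List ℝ), l.Pairwise (· ≤ ·) → ∀ (t : Multiset ℝ), t ≤ ↑l →
    ((l.take (Multiset.card t)).sum) ≤ t.sum := by
  intro l
  induction l with
  | nil =>
    intro _ t ht
    have : t = 0 := Multiset.le_zero.mp (by simpa using ht)
    simp [this]
  | cons a l ih =>
    intro hs t ht
    have hl : l.Pairwise (· ≤ ·) := hs.of_cons
    have ha : ∀ x ∈ l, a ≤ x := (List.pairwise_cons.mp hs).1
    rcases Nat.eq_zero_or_pos (Multiset.card t) with h0 | hpos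
    · have : t = 0 := Multiset.card_eq_zero.mp h0
      simp [this]
    obtain ⟨m, hm⟩ := Nat.exists_eq_succ_of_ne_zero (Nat.pos_iff_ne_zero.mp hpos)
    have hcoe : (↑(a :: l) : Multiset ℝ) = a ::ₘ (↑l : Multiset ℝ) := rfl
    by_cases hat : a ∈ t
    · have h1 : t.erase a ≤ ↑l := by
        have := Multiset.erase_le_erase a ht
        rwa [hcoe, Multiset.erase_cons_head] at this
      have h2 := ih hl (t.erase a) h1
      have hcard : Multiset.card (t.erase a) = m := by
        rw [Multiset.card_erase_of_mem hat, hm]; rfl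
      rw [hcard] at h2
      rw [hm, List.take_succ_cons, List.sum_cons, ← Multiset.sum_erase hat]
      linarith
    · have h1 : t ≤ ↑l := by
        rw [Multiset.le_iff_count] at ht ⊢
        intro x
        by_cases hx : x = a
        · subst hx; simp [Multiset.count_eq_zero_of_notMem hat]
        · have := ht x
          rwa [hcoe, Multiset.count_cons_of_ne hx] at this
      have h2 := ih hl t h1
      have hlen : Multiset.card t ≤ l.length := by
        have := Multiset.card_le_card h1
        simpa using this
      have hmlt : m < l.length := by omega
      have h3 : (l.take (m+1)).sum = (l.take m).sum + l.get ⟨m, hmlt⟩ :=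
        List.sum_take_succ l m hmlt
      have h4 : a ≤ l.get ⟨m, hmlt⟩ := ha _ (List.get_mem l ⟨m, hmlt⟩)
      rw [hm] at h2 ⊢
      rw [List.take_succ_cons, List.sum_cons]
      rw [h3] at h2
      linarith

lemma list_eq_of_prefix_sums : ∀ (l₁ l₂ : List ℝ), l₁.length = l₂.length →
    (∀ q : ℕ, 1 ≤ q → q ≤ l₁.length → (l₁.take q).sum = (l₂.take q).sum) → l₁ = l₂ := by
  intro l₁
  induction l₁ with
  | nil =>
    intro l₂ hlen _
    exact (List.length_eq_zero_iff.mp hlen.symm).symm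
  | cons a l ih =>
    intro l₂ hlen hsum
    cases l₂ with
    | nil => simp at hlen
    | cons b l' =>
      have hab : a = b := by
        have := hsum 1 le_rfl (by simp)
        simpa using this
      subst hab
      have hl : l = l' := by
        apply ih l' (by simpa using hlen)
        intro q hq1 hq2
        have := hsum (q+1) (by omega) (by simp; omega)
        simpa [List.take_succ_cons] using this
      rw [hl]


open Multiset

/-- sum of the `q` smallest elements of `A` -/
noncomputable def mq (A : Multiset ℝ) (q : ℕ) : ℝ := ((A.sort (· ≤ ·)).take q).sum

lemma birthSeries_extPow (f : Multiset (ℝ×ℝ)) (p : ℕ) :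
    birthSeries (extPow f p)
      = (((f.map Prod.fst).powersetCard p).map (fun s => Finsupp.single s.sum (1:ℤ))).sum := by
  rw [birthSeries, extPow, Multiset.map_map, Multiset.powersetCard_map, Multiset.map_map]
  rfl

lemma deathSeries_extPow (f : Multiset (ℝ×ℝ)) (p : ℕ) :
    deathSeries (extPow f p)
      = ((f.powersetCard p).map (fun s =>
          Finsupp.single ((s.map Prod.fst).sum + sInf {x : ℝ | x ∈ s.map Prod.snd}) (1:ℤ))).sum := by
  rw [deathSeries, extPow, Multiset.map_map]
  rfl

lemma crit_apply (f : Multiset (ℝ×ℝ)) (q : ℕ) (β : ℝ) :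
    critSeries (extPow f q) β
      = birthSeries (extPow f q) β - deathSeries (extPow f q) β := by
  simp [critSeries]

/-- any `q`-element sub-multiset of births has sum at least `mq`. -/
lemma mq_le_sum {f : Multiset (ℝ×ℝ)} {q : ℕ} {s : Multiset ℝ}
    (hs : s ∈ (f.map Prod.fst).powersetCard q) : mq (f.map Prod.fst) q ≤ s.sum := by
  obtain ⟨hle, hcard⟩ := Multiset.mem_powersetCard.mp hs
  have h := take_sum_le ((f.map Prod.fst).sort (· ≤ ·)) (Multiset.pairwise_sort _ _) s
    (by rw [Multiset.sort_eq]; exact hle)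
  rw [hcard] at h
  exact h

lemma sInf_lifespan_pos {f : Multiset (ℝ×ℝ)} (hf : IsBarcode f) {q : ℕ} (hq : 1 ≤ q)
    {s : Multiset (ℝ×ℝ)} (hs : s ∈ f.powersetCard q) :
    0 < sInf {x : ℝ | x ∈ s.map Prod.snd} := by
  obtain ⟨hle, hcard⟩ := Multiset.mem_powersetCard.mp hs
  have hne : s ≠ 0 := by
    intro h0; rw [h0] at hcard; simp at hcard; omega
  obtain ⟨b, hb⟩ := Multiset.exists_mem_of_ne_zero hne
  have hSne : ({x : ℝ | x ∈ s.map Prod.snd}).Nonempty :=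
    ⟨b.2, Multiset.mem_map_of_mem _ hb⟩
  have hSfin : ({x : ℝ | x ∈ s.map Prod.snd}).Finite := Multiset.finite_toSet _
  have hmem := hSne.csInf_mem hSfin
  rcases Multiset.mem_map.mp hmem with ⟨c, hc, hceq⟩
  rw [← hceq]
  exact hf c (Multiset.mem_of_le hle hc)

/-- every death grade of `extPow f q` is strictly bigger than `mq`. -/
lemma mq_lt_death {f : Multiset (ℝ×ℝ)} (hf : IsBarcode f) {q : ℕ} (hq : 1 ≤ q)
    {s : Multiset (ℝ×ℝ)} (hs : s ∈ f.powersetCard q) :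
    mq (f.map Prod.fst) q < (s.map Prod.fst).sum + sInf {x : ℝ | x ∈ s.map Prod.snd} := by
  obtain ⟨hle, hcard⟩ := Multiset.mem_powersetCard.mp hs
  have h1 : mq (f.map Prod.fst) q ≤ (s.map Prod.fst).sum := by
    apply mq_le_sum (f := f) (q := q)
    rw [Multiset.mem_powersetCard]
    exact ⟨Multiset.map_le_map hle, by rw [Multiset.card_map, hcard]⟩
  have h2 := sInf_lifespan_pos hf hq hs
  linarith

lemma crit_mq_pos {f : Multiset (ℝ×ℝ)} (hf : IsBarcode f) {q : ℕ}
    (hq1 : 1 ≤ q) (hq2 : q ≤ Multiset.card f) :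
    0 < critSeries (extPow f q) (mq (f.map Prod.fst) q) := by
  rw [crit_apply, birthSeries_extPow, deathSeries_extPow, sum_single_apply, sum_single_apply]
  have hD : ((f.powersetCard q).map (fun s =>
      if (s.map Prod.fst).sum + sInf {x : ℝ | x ∈ s.map Prod.snd} = mq (f.map Prod.fst) q
      then (1:ℤ) else 0)).sum = 0 := by
    apply sum_ite_zero
    intro s hs
    exact ne_of_gt (mq_lt_death hf hq1 hs)
  rw [hD]
  have hB : 0 < (((f.map Prod.fst).powersetCard q).map (fun s =>
      if s.sum = mq (f.map Prod.fst) q then (1:ℤ) else 0)).sum := by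
    apply sum_ite_pos
    refine ⟨(((f.map Prod.fst).sort (· ≤ ·)).take q : List ℝ), ?_, ?_⟩
    · rw [Multiset.mem_powersetCard]
      constructor
      · exact le_trans (Multiset.coe_le.mpr (List.take_sublist _ _).subperm)
          (le_of_eq (Multiset.sort_eq _ _))
      · rw [Multiset.coe_card, List.length_take, Multiset.length_sort, Multiset.card_map]
        omega
    · rw [Multiset.sum_coe]; rfl
  omega

lemma crit_eq_zero_of_lt {f : Multiset (ℝ×ℝ)} (hf : IsBarcode f) {q : ℕ}
    (hq1 : 1 ≤ q) {β : ℝ} (hβ : β < mq (f.map Prod.fst) q) :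
    critSeries (extPow f q) β = 0 := by
  rw [crit_apply, birthSeries_extPow, deathSeries_extPow, sum_single_apply, sum_single_apply]
  rw [sum_ite_zero, sum_ite_zero]
  · ring
  · intro s hs
    have := mq_lt_death hf hq1 hs
    linarith
  · intro s hs
    have := mq_le_sum hs
    linarith

lemma crit_zero_of_card_lt {f : Multiset (ℝ×ℝ)} {q : ℕ} (hq : Multiset.card f < q) :
    critSeries (extPow f q) = 0 := by
  have hpc : f.powersetCard q = 0 := by
    obtain ⟨i, hi, rfl⟩ : ∃ i, 0 < i ∧ q = Multiset.card f + i :=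
      ⟨q - Multiset.card f, by omega, by omega⟩
    exact Multiset.powersetCard_card_add f hi
  rw [critSeries, extPow, hpc]
  simp [birthSeries, deathSeries]

/-- the birth and death series of all exterior powers are determined by
the exterior critical series. -/
theorem birth_death_determined_by_extCrit
    (f g : Multiset (ℝ × ℝ)) (hf : IsBarcode f) (hg : IsBarcode g)
    (h : ∀ q : ℕ, 1 ≤ q → critSeries (extPow f q) = critSeries (extPow g q)) :
    ∀ p : ℕ, 1 ≤ p →
      birthSeries (extPow f p) = birthSeries (extPow g p) ∧
      deathSeries (extPow f p) = deathSeries (extPow g p) := by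
  -- Step A: the cardinalities agree
  have hcard : Multiset.card f = Multiset.card g := by
    by_contra hne
    rcases Nat.lt_or_ge (Multiset.card f) (Multiset.card g) with hlt | hge
    · have h1 : critSeries (extPow f (Multiset.card g)) = 0 := crit_zero_of_card_lt hlt
      have h2 : 0 < critSeries (extPow g (Multiset.card g))
          (mq (g.map Prod.fst) (Multiset.card g)) := crit_mq_pos hg (by omega) le_rfl
      rw [← h (Multiset.card g) (by omega), h1] at h2
      simp at h2
    · have hlt : Multiset.card g < Multiset.card f := by omega
      have h1 : critSeries (extPow g (Multiset.card f)) = 0 := crit_zero_of_card_lt hlt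
      have h2 : 0 < critSeries (extPow f (Multiset.card f))
          (mq (f.map Prod.fst) (Multiset.card f)) := crit_mq_pos hf (by omega) le_rfl
      rw [h (Multiset.card f) (by omega), h1] at h2
      simp at h2
  -- Step B: the birth multisets agree
  have hmq : ∀ q : ℕ, 1 ≤ q → q ≤ Multiset.card f →
      mq (f.map Prod.fst) q = mq (g.map Prod.fst) q := by
    intro q hq1 hq2
    have e1 : 0 < critSeries (extPow f q) (mq (f.map Prod.fst) q) := crit_mq_pos hf hq1 hq2
    have e2 : 0 < critSeries (extPow g q) (mq (g.map Prod.fst) q) :=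
      crit_mq_pos hg hq1 (hcard ▸ hq2)
    rcases lt_trichotomy (mq (f.map Prod.fst) q) (mq (g.map Prod.fst) q) with hlt | heq | hgt
    · exfalso
      have := crit_eq_zero_of_lt hg hq1 hlt
      rw [← h q hq1] at this
      rw [this] at e1
      exact lt_irrefl 0 e1
    · exact heq
    · exfalso
      have := crit_eq_zero_of_lt hf hq1 hgt
      rw [h q hq1] at this
      rw [this] at e2
      exact lt_irrefl 0 e2
  have hbirths : f.map Prod.fst = g.map Prod.fst := by
    have hsort : (f.map Prod.fst).sort (· ≤ ·) = (g.map Prod.fst).sort (· ≤ ·) := by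
      apply list_eq_of_prefix_sums
      · rw [Multiset.length_sort, Multiset.length_sort, Multiset.card_map,
          Multiset.card_map, hcard]
      · intro q hq1 hq2
        have hq2' : q ≤ Multiset.card f := by
          rwa [Multiset.length_sort, Multiset.card_map] at hq2
        exact hmq q hq1 hq2'
    calc f.map Prod.fst = ↑((f.map Prod.fst).sort (· ≤ ·)) := (Multiset.sort_eq _ _).symm
      _ = ↑((g.map Prod.fst).sort (· ≤ ·)) := by rw [hsort]
      _ = g.map Prod.fst := Multiset.sort_eq _ _
  -- Step C: conclude
  intro p hp
  have hB : birthSeries (extPow f p) = birthSeries (extPow g p) := by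
    rw [birthSeries_extPow, birthSeries_extPow, hbirths]
  refine ⟨hB, ?_⟩
  have hC := h p hp
  have hDf : deathSeries (extPow f p)
      = birthSeries (extPow f p) - critSeries (extPow f p) := by
    rw [critSeries]; abel
  have hDg : deathSeries (extPow g p)
      = birthSeries (extPow g p) - critSeries (extPow g p) := by
    rw [critSeries]; abel
  rw [hDf, hDg, hB, hC]
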